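/- Let f1, f2 be homogeneous of degrees d1 ≤ d2 in A[X1,X2] forming a regular sequence, with δ = d1+d2−2, and assume d2−1 ≤ ν ≤ δ (so 0 ≤ δ−ν ≤ d1−1). Then the collection of Sylvester forms (sylv_α(f1,f2))_{|α|=δ−ν} is an A-basis of H^0_m(B)_ν, where B = A[X1,X2]/(f1,f2) and m = (X1,X2). -/

import Mathlib

open MvPolynomial
open scoped Pointwise

namespace Stmt16Aux

variable {A : Type*} [CommRing A]




lemma X_mul_eq_zero (i : Fin 2) {p : MvPolynomial (Fin 2) A} (h : X i * p = 0) : p = 0 := by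
  ext m
  have := congrArg (coeff (Finsupp.single i 1 + m)) h
  simpa [coeff_X_mul] using this

lemma X_mul_cancel (i : Fin 2) {p q : MvPolynomial (Fin 2) A} (h : X i * p = X i * q) : p = q := by
  have h0 : X i * (p - q) = 0 := by linear_combination h
  have := X_mul_eq_zero i h0
  linear_combination this

lemma X_pow_mul_cancel (i : Fin 2) (k : ℕ) {p q : MvPolynomial (Fin 2) A}
    (h : X i ^ k * p = X i ^ k * q) : p = q := by
  induction k with
  | zero => simpa using h
  | succ k ih =>
    have h' : X i * (X i ^ k * p) = X i * (X i ^ k * q) := by linear_combination h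
    exact ih (X_mul_cancel i h')

/-- regularity of the pair `X0^p, X1^q`. -/
lemma reg2var (p q : ℕ) {e1 e2 : MvPolynomial (Fin 2) A}
    (h : X 0 ^ p * e1 + X 1 ^ q * e2 = 0) :
    ∃ w, e1 = X 1 ^ q * w ∧ e2 = -(X 0 ^ p * w) := by
  classical
  set g : MvPolynomial (Fin 2) A := X 0 ^ p * e1 with hg
  have hg2 : g = -(X 1 ^ q * e2) := by rw [hg]; linear_combination h
  -- every monomial in the support of g is divisible by X0^p * X1^q
  have hsupp : ∀ m ∈ g.support, Finsupp.single (0 : Fin 2) p + Finsupp.single (1 : Fin 2) q ≤ m := by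
    intro m hm
    have hc : coeff m g ≠ 0 := mem_support_iff.mp hm
    have h1 : Finsupp.single (0 : Fin 2) p ≤ m := by
      by_contra hle
      apply hc
      rw [hg, X_pow_eq_monomial, coeff_monomial_mul', if_neg hle]
    have h2 : Finsupp.single (1 : Fin 2) q ≤ m := by
      by_contra hle
      apply hc
      rw [hg2, coeff_neg, X_pow_eq_monomial, coeff_monomial_mul', if_neg hle, neg_zero]
    intro i
    have e0 := Finsupp.le_def.mp h1 i
    have e1 := Finsupp.le_def.mp h2 i
    fin_cases i <;> simp [Finsupp.single_apply] at e0 e1 ⊢ <;> omega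
  have hmem : g ∈ Ideal.span ((fun s => monomial s (1 : A)) ''
      {Finsupp.single (0 : Fin 2) p + Finsupp.single (1 : Fin 2) q}) := by
    rw [mem_ideal_span_monomial_image]
    intro m hm
    exact ⟨_, Set.mem_singleton _, hsupp m hm⟩
  rw [Set.image_singleton, Ideal.mem_span_singleton'] at hmem
  obtain ⟨w, hw⟩ := hmem
  have hg3 : g = X 0 ^ p * X 1 ^ q * w := by
    rw [← hw, X_pow_eq_monomial, X_pow_eq_monomial, monomial_mul, mul_one]
    ring
  refine ⟨w, ?_, ?_⟩
  · apply X_pow_mul_cancel (0 : Fin 2) p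
    rw [← hg]; rw [hg3]; ring
  · apply X_pow_mul_cancel (1 : Fin 2) q
    have : -(X 1 ^ q * e2) = X 0 ^ p * X 1 ^ q * w := by rw [← hg2, hg3]
    linear_combination -this





lemma hc_mul_right {f : MvPolynomial (Fin 2) A} {d : ℕ} (hf : f.IsHomogeneous d)
    (U : MvPolynomial (Fin 2) A) (n : ℕ) :
    homogeneousComponent (n + d) (U * f) = homogeneousComponent n U * f := by
  classical
  conv_lhs => rw [← U.sum_homogeneousComponent]
  rw [Finset.sum_mul, map_sum]
  have key : ∀ i, homogeneousComponent (n + d) (homogeneousComponent i U * f)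
      = if i = n then homogeneousComponent i U * f else 0 := by
    intro i
    have hmem : homogeneousComponent i U * f ∈ homogeneousSubmodule (Fin 2) A (i + d) :=
      (mem_homogeneousSubmodule _ _).mpr ((homogeneousComponent_isHomogeneous i U).mul hf)
    rw [homogeneousComponent_of_mem hmem]
    by_cases h : i = n
    · subst h; simp
    · rw [if_neg (by omega), if_neg h]
  simp_rw [key]
  rw [Finset.sum_ite_eq' (Finset.range (U.totalDegree + 1)) n
    (fun i => homogeneousComponent i U * f)]
  by_cases hn : n ∈ Finset.range (U.totalDegree + 1)
  · rw [if_pos hn]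
  · rw [if_neg hn, homogeneousComponent_eq_zero _ U (by simpa using hn), zero_mul]

lemma hc_mul_right_lt {f : MvPolynomial (Fin 2) A} {d : ℕ} (hf : f.IsHomogeneous d)
    (U : MvPolynomial (Fin 2) A) {n : ℕ} (h : n < d) :
    homogeneousComponent n (U * f) = 0 := by
  classical
  conv_lhs => rw [← U.sum_homogeneousComponent]
  rw [Finset.sum_mul, map_sum]
  apply Finset.sum_eq_zero
  intro i _
  have hmem : homogeneousComponent i U * f ∈ homogeneousSubmodule (Fin 2) A (i + d) :=
    (mem_homogeneousSubmodule _ _).mpr ((homogeneousComponent_isHomogeneous i U).mul hf)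
  rw [homogeneousComponent_of_mem hmem, if_neg (by omega)]

variable {f1 f2 : MvPolynomial (Fin 2) A}

lemma regf1 (hreg : RingTheory.Sequence.IsRegular (MvPolynomial (Fin 2) A) [f1, f2])
    {x : MvPolynomial (Fin 2) A} (h : f1 * x = 0) : x = 0 := by
  have hw := hreg.toIsWeaklyRegular
  rw [RingTheory.Sequence.isWeaklyRegular_cons_iff] at hw
  exact hw.1 (by simpa [smul_eq_mul] using h)

lemma regf2 (hreg : RingTheory.Sequence.IsRegular (MvPolynomial (Fin 2) A) [f1, f2])
    {q : MvPolynomial (Fin 2) A} (h : q * f2 ∈ Ideal.span {f1}) : q ∈ Ideal.span {f1} := by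
  have hw := hreg.toIsWeaklyRegular
  rw [RingTheory.Sequence.isWeaklyRegular_cons_iff] at hw
  have h2 := hw.2
  rw [RingTheory.Sequence.isWeaklyRegular_cons_iff] at h2
  have hreg2 := h2.1
  -- hreg2 : IsSMulRegular (QuotSMulTop f1 R) f2
  have hset : f1 • (⊤ : Submodule (MvPolynomial (Fin 2) A) (MvPolynomial (Fin 2) A))
      = Ideal.span {f1} := by
    rw [← Submodule.ideal_span_singleton_smul, Ideal.smul_eq_mul, Ideal.mul_top]
  have hz : f2 • (Submodule.Quotient.mk q : QuotSMulTop f1 (MvPolynomial (Fin 2) A)) = 0 := by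
    rw [← Submodule.Quotient.mk_smul, Submodule.Quotient.mk_eq_zero, hset]
    simpa [smul_eq_mul, mul_comm] using h
  have h0 : f2 • (Submodule.Quotient.mk q : QuotSMulTop f1 (MvPolynomial (Fin 2) A))
      = f2 • (0 : QuotSMulTop f1 (MvPolynomial (Fin 2) A)) := by simpa using hz
  have := hreg2 h0
  rw [Submodule.Quotient.mk_eq_zero, hset] at this
  exact this

/-- Koszul syzygy. -/
lemma cross (hreg : RingTheory.Sequence.IsRegular (MvPolynomial (Fin 2) A) [f1, f2])
    {α β : MvPolynomial (Fin 2) A} (h : α * f1 = β * f2) :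
    ∃ W, β = W * f1 ∧ α = W * f2 := by
  have hβ : β * f2 ∈ Ideal.span {f1} := by
    rw [← h, Ideal.mem_span_singleton']; exact ⟨α, rfl⟩
  obtain ⟨W, hW⟩ := Ideal.mem_span_singleton'.mp (regf2 hreg hβ)
  refine ⟨W, hW.symm, ?_⟩
  have h0 : f1 * (α - W * f2) = 0 := by
    have : α * f1 = (W * f1) * f2 := by rw [hW, h]
    linear_combination this
  have := regf1 hreg h0
  linear_combination this

lemma Wsplit (W : MvPolynomial (Fin 2) A) :
    ∃ (c : A) (W0 W1 : MvPolynomial (Fin 2) A), W = C c + X 0 * W0 + X 1 * W1 := by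
  induction W using MvPolynomial.induction_on with
  | C a => exact ⟨a, 0, 0, by simp⟩
  | add p q hp hq =>
    obtain ⟨c, W0, W1, h1⟩ := hp
    obtain ⟨c', W0', W1', h2⟩ := hq
    exact ⟨c + c', W0 + W0', W1 + W1', by rw [h1, h2, map_add]; ring⟩
  | mul_X p i hp =>
    fin_cases i
    · exact ⟨0, p, 0, by simp; ring⟩
    · exact ⟨0, 0, p, by simp; ring⟩


/-- The socle lemma: if `X0*H` and `X1*H` lie in `(f1,f2)` then `H` is congruent to a
multiple of the "Bezout" form `t = b11*b22 - b12*b21` modulo `(f1, f2)`. -/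
lemma socle (hreg : RingTheory.Sequence.IsRegular (MvPolynomial (Fin 2) A) [f1, f2])
    (b11 b12 b21 b22 : MvPolynomial (Fin 2) A)
    (hb1 : f1 = X 0 * b11 + X 1 * b12) (hb2 : f2 = X 0 * b21 + X 1 * b22)
    {H : MvPolynomial (Fin 2) A}
    (h0 : X 0 * H ∈ Ideal.span {f1, f2}) (h1 : X 1 * H ∈ Ideal.span {f1, f2}) :
    ∃ c : A, H - C c * (b11 * b22 - b12 * b21) ∈ Ideal.span {f1, f2} := by
  obtain ⟨U, V, hUV⟩ := Ideal.mem_span_pair.mp h0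
  obtain ⟨U', V', hUV'⟩ := Ideal.mem_span_pair.mp h1
  -- the Koszul syzygy
  have hsyz : (X 1 * U - X 0 * U') * f1 = (X 0 * V' - X 1 * V) * f2 := by
    linear_combination X 1 * hUV - X 0 * hUV'
  obtain ⟨W, hW1, hW2⟩ := cross hreg hsyz
  -- hW1 : X 0 * V' - X 1 * V = W * f1,  hW2 : X 1 * U - X 0 * U' = W * f2
  obtain ⟨c, W0, W1, hWs⟩ := Wsplit W
  -- divide the U-relation
  have hU0 : X 0 ^ 1 * (U' + W0 * f2 + C c * b21) + X 1 ^ 1 * (-(U - W1 * f2 - C c * b22)) = 0 := by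
    have hf2' : X 0 * b21 + X 1 * b22 = f2 := hb2.symm
    linear_combination (-1 : MvPolynomial (Fin 2) A) * hW2 - f2 * hWs + C c * hf2'
  obtain ⟨w1, hw1a, hw1b⟩ := reg2var 1 1 hU0
  have hU : U = X 0 * w1 + W1 * f2 + C c * b22 := by
    have := hw1b  -- -(U - W1*f2 - C c*b22) = -(X 0^1 * w1)
    have h' : U - W1 * f2 - C c * b22 = X 0 ^ 1 * w1 := by linear_combination -this
    linear_combination h'
  -- divide the V-relation
  have hV0 : X 0 ^ 1 * (V' - W0 * f1 - C c * b11) + X 1 ^ 1 * (-(V + W1 * f1 + C c * b12)) = 0 := by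
    have hf1' : X 0 * b11 + X 1 * b12 = f1 := hb1.symm
    linear_combination hW1 + f1 * hWs - C c * hf1'
  obtain ⟨w2, hw2a, hw2b⟩ := reg2var 1 1 hV0
  have hV : V = X 0 * w2 - W1 * f1 - C c * b12 := by
    have h' : V + W1 * f1 + C c * b12 = X 0 ^ 1 * w2 := by linear_combination -hw2b
    linear_combination h'
  -- conclude
  have hfin : X 0 * (H - C c * (b11 * b22 - b12 * b21) - (w1 * f1 + w2 * f2)) = 0 := by
    linear_combination -hUV + f1 * hU + f2 * hV + C c * X 0 * (mul_comm b11 b22) +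
      C c * b22 * hb1 - C c * b12 * hb2
  have := X_mul_eq_zero 0 hfin
  have heq : H - C c * (b11 * b22 - b12 * b21) = w1 * f1 + w2 * f2 := by linear_combination this
  exact ⟨c, heq ▸ Ideal.mem_span_pair.mpr ⟨w1, w2, rfl⟩⟩

/-- Choice-independence of Sylvester forms: two decompositions of `(f1, f2)` with the same
exponents have congruent determinants modulo `(f1, f2)`. -/
lemma ci (hreg : RingTheory.Sequence.IsRegular (MvPolynomial (Fin 2) A) [f1, f2])
    (p q : ℕ) (c11 c12 c21 c22 c11' c12' c21' c22' : MvPolynomial (Fin 2) A)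
    (h1 : f1 = X 0 ^ p * c11 + X 1 ^ q * c12) (h2 : f2 = X 0 ^ p * c21 + X 1 ^ q * c22)
    (h1' : f1 = X 0 ^ p * c11' + X 1 ^ q * c12') (h2' : f2 = X 0 ^ p * c21' + X 1 ^ q * c22') :
    (c11 * c22 - c12 * c21) - (c11' * c22' - c12' * c21') ∈ Ideal.span {f1, f2} := by
  have e1 : X 0 ^ p * (c11 - c11') + X 1 ^ q * (c12 - c12') = 0 := by
    linear_combination h1.symm + h1'
  have e2 : X 0 ^ p * (c21 - c21') + X 1 ^ q * (c22 - c22') = 0 := by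
    linear_combination h2.symm + h2'
  obtain ⟨u1, hu1, hu2⟩ := reg2var p q e1
  obtain ⟨u2, hu3, hu4⟩ := reg2var p q e2
  have key : (c11 * c22 - c12 * c21) - (c11' * c22' - c12' * c21')
      = u1 * f2 - u2 * f1 := by
    linear_combination (c11 - u1 * X 1 ^ q) * hu4 + c22' * hu1 - (c12 + u1 * X 0 ^ p) * hu3 - c21' * hu2 - u1 * h2 + u2 * h1
  rw [key]
  refine Ideal.mem_span_pair.mpr ⟨-u2, u1, by ring⟩

end Stmt16Aux

open Stmt16Aux

set_option maxHeartbeats 2000000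

/-- `isSylv d1 d2 β1 β2 f1 f2 s` : `s` is (a representative of) the Sylvester form
`sylv_{(β1,β2)}(f1,f2)`, i.e. the determinant of a decomposition
`f_i = X1^{β1+1} a_{i,1} + X2^{β2+1} a_{i,2}` with `a_{i,j}` homogeneous of degree
`d_i − β_j − 1`. -/
def isSylv {A : Type*} [CommRing A] (d1 d2 β1 β2 : ℕ)
    (f1 f2 s : MvPolynomial (Fin 2) A) : Prop :=
  ∃ a11 a12 a21 a22 : MvPolynomial (Fin 2) A,
    a11.IsHomogeneous (d1 - β1 - 1) ∧ a12.IsHomogeneous (d1 - β2 - 1) ∧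
    a21.IsHomogeneous (d2 - β1 - 1) ∧ a22.IsHomogeneous (d2 - β2 - 1) ∧
    f1 = X 0 ^ (β1 + 1) * a11 + X 1 ^ (β2 + 1) * a12 ∧
    f2 = X 0 ^ (β1 + 1) * a21 + X 1 ^ (β2 + 1) * a22 ∧
    s = a11 * a22 - a12 * a21

/-- Let `f1, f2` be homogeneous of degrees `d1 ≤ d2` in `A[X1,X2]`
forming a regular sequence, `δ = d1+d2−2`, and assume `d2 − 1 ≤ ν ≤ δ` (so
`0 ≤ δ − ν ≤ d1 − 1`).  Then the Sylvester forms `(sylv_α(f1,f2))_{|α| = δ−ν}` form an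
`A`-basis of `H^0_m(B)_ν`: they are linearly independent over `A` modulo `(f1,f2)`,
and every inertia form of degree `ν` is, modulo `(f1,f2)`, an `A`-linear combination of
them.  (Here `α = (α1, δ−ν−α1)` for `0 ≤ α1 ≤ δ−ν`, and `s α1` denotes a chosen
representative of `sylv_α(f1,f2)`.) -/
theorem stmt16 {A : Type*} [CommRing A] [Nontrivial A] (d1 d2 ν : ℕ)
    (hd1 : 1 ≤ d1) (hd12 : d1 ≤ d2)
    (hν1 : d2 - 1 ≤ ν) (hν2 : ν ≤ d1 + d2 - 2)
    (f1 f2 : MvPolynomial (Fin 2) A)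
    (hf1 : f1.IsHomogeneous d1) (hf2 : f2.IsHomogeneous d2)
    (hreg : RingTheory.Sequence.IsRegular (MvPolynomial (Fin 2) A) [f1, f2])
    (s : ℕ → MvPolynomial (Fin 2) A)
    (hs : ∀ α1 ≤ d1 + d2 - 2 - ν,
      isSylv d1 d2 α1 (d1 + d2 - 2 - ν - α1) f1 f2 (s α1)) :
    -- linear independence modulo `(f1, f2)`
    (∀ c : ℕ → A,
      (∑ α1 ∈ Finset.range (d1 + d2 - 2 - ν + 1), C (c α1) * s α1) ∈
        Ideal.span {f1, f2} →
      ∀ α1 ≤ d1 + d2 - 2 - ν, c α1 = 0) ∧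
    -- spanning: every inertia form of degree `ν` is a combination of the `s α1`
    (∀ G : MvPolynomial (Fin 2) A, G.IsHomogeneous ν →
      (∃ k : ℕ, ∀ g ∈ (Ideal.span {(X 0 : MvPolynomial (Fin 2) A), X 1}) ^ k,
        g * G ∈ Ideal.span {f1, f2}) →
      ∃ c : ℕ → A,
        G - ∑ α1 ∈ Finset.range (d1 + d2 - 2 - ν + 1), C (c α1) * s α1 ∈
          Ideal.span {f1, f2}) := by
  classical
  set I := Ideal.span {f1, f2} with hIdef
  set r := d1 + d2 - 2 - ν with hrdef
  have hrd1 : r + 1 ≤ d1 := by omega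
  have hνδ : ν + r = d1 + d2 - 2 := by omega
  have hs' : ∀ j, j ≤ r → ∃ a11 a12 a21 a22 : MvPolynomial (Fin 2) A,
      a11.IsHomogeneous (d1 - j - 1) ∧ a12.IsHomogeneous (d1 - (r - j) - 1) ∧
      a21.IsHomogeneous (d2 - j - 1) ∧ a22.IsHomogeneous (d2 - (r - j) - 1) ∧
      f1 = X 0 ^ (j + 1) * a11 + X 1 ^ ((r - j) + 1) * a12 ∧
      f2 = X 0 ^ (j + 1) * a21 + X 1 ^ ((r - j) + 1) * a22 ∧
      s j = a11 * a22 - a12 * a21 := hs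
  choose a11 a12 a21 a22 h11 h12 h21 h22 hdc1 hdc2 hdet using hs'
  -- Sylvester identities
  have IdA : ∀ j (hj : j ≤ r), X 0 ^ (j+1) * s j ∈ I := by
    intro j hj
    rw [hIdef, Ideal.mem_span_pair]
    refine ⟨a22 j hj, -(a12 j hj), ?_⟩
    rw [hdet j hj]
    linear_combination (a22 j hj) * (hdc1 j hj) - (a12 j hj) * (hdc2 j hj)
  have IdB : ∀ j (hj : j ≤ r), X 1 ^ (r - j + 1) * s j ∈ I := by
    intro j hj
    rw [hIdef, Ideal.mem_span_pair]
    refine ⟨-(a21 j hj), a11 j hj, ?_⟩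
    rw [hdet j hj]
    linear_combination (a11 j hj) * (hdc2 j hj) - (a21 j hj) * (hdc1 j hj)
  have X0pow_mem : ∀ j (hj : j ≤ r) (m : ℕ), j + 1 ≤ m → X 0 ^ m * s j ∈ I := by
    intro j hj m hm
    have e : X 0 ^ m * s j = X 0 ^ (m - (j+1)) * (X 0 ^ (j+1) * s j) := by
      rw [← mul_assoc, ← pow_add]
      congr 2
      omega
    rw [e]; exact Ideal.mul_mem_left _ _ (IdA j hj)
  have X1pow_mem : ∀ j (hj : j ≤ r) (m : ℕ), r - j + 1 ≤ m → X 1 ^ m * s j ∈ I := by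
    intro j hj m hm
    have e : X 1 ^ m * s j = X 1 ^ (m - (r - j + 1)) * (X 1 ^ (r - j + 1) * s j) := by
      rw [← mul_assoc, ← pow_add]
      congr 2
      omega
    rw [e]; exact Ideal.mul_mem_left _ _ (IdB j hj)
  -- homogeneity of the Sylvester forms
  have hsH : ∀ j (hj : j ≤ r), (s j).IsHomogeneous ν := by
    intro j hj
    rw [hdet j hj]
    have e1 : (d1 - j - 1) + (d2 - (r - j) - 1) = ν := by omega
    have e2 : (d1 - (r - j) - 1) + (d2 - j - 1) = ν := by omega
    exact (e1 ▸ (h11 j hj).mul (h22 j hj)).sub (e2 ▸ (h12 j hj).mul (h21 j hj))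
  -- hc helpers
  have hcself : ∀ (p : MvPolynomial (Fin 2) A) (n : ℕ), p.IsHomogeneous n →
      homogeneousComponent n p = p := by
    intro p n hp
    rw [homogeneousComponent_of_mem ((mem_homogeneousSubmodule _ _).mpr hp), if_pos rfl]
  have hcI : ∀ (n : ℕ) (P Q : MvPolynomial (Fin 2) A),
      homogeneousComponent n (P * f1 + Q * f2) ∈ I := by
    intro n P Q
    rw [map_add]
    apply Ideal.add_mem
    · rcases Nat.lt_or_ge n d1 with h | h
      · rw [hc_mul_right_lt hf1 P h]; exact Ideal.zero_mem I
      · rw [show n = (n - d1) + d1 by omega, hc_mul_right hf1 P]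
        exact Ideal.mul_mem_left _ _ (Ideal.subset_span (by simp))
    · rcases Nat.lt_or_ge n d2 with h | h
      · rw [hc_mul_right_lt hf2 Q h]; exact Ideal.zero_mem I
      · rw [show n = (n - d2) + d2 by omega, hc_mul_right hf2 Q]
        exact Ideal.mul_mem_left _ _ (Ideal.subset_span (by simp))
  -- base (0,0) decomposition and the key faithfulness fact
  have hb1 : f1 = X 0 * (a11 0 (Nat.zero_le r)) + X 1 * (X 1 ^ r * a12 0 (Nat.zero_le r)) := by
    rw [hdc1 0 (Nat.zero_le r)]
    simp only [Nat.sub_zero, Nat.zero_add, pow_one]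
    ring
  have hb2 : f2 = X 0 * (a21 0 (Nat.zero_le r)) + X 1 * (X 1 ^ r * a22 0 (Nat.zero_le r)) := by
    rw [hdc2 0 (Nat.zero_le r)]
    simp only [Nat.sub_zero, Nat.zero_add, pow_one]
    ring
  have htid : (a11 0 (Nat.zero_le r)) * (X 1 ^ r * a22 0 (Nat.zero_le r))
      - (X 1 ^ r * a12 0 (Nat.zero_le r)) * (a21 0 (Nat.zero_le r)) = X 1 ^ r * s 0 := by
    rw [hdet 0 (Nat.zero_le r)]; ring
  have hthom : (X 1 ^ r * s 0).IsHomogeneous (ν + r) := by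
    have := (isHomogeneous_X_pow (R := A) 1 r).mul (hsH 0 (Nat.zero_le r))
    exact (show r + ν = ν + r by omega) ▸ this
  -- key fact : the top Sylvester form is A-faithful modulo (f1,f2)
  have kf : ∀ c : A, C c * (X 1 ^ r * s 0) ∈ I → c = 0 := by
    intro c hc
    set b11 := a11 0 (Nat.zero_le r) with hb11d
    set b12 := X 1 ^ r * a12 0 (Nat.zero_le r) with hb12d
    set b21 := a21 0 (Nat.zero_le r) with hb21d
    set b22 := X 1 ^ r * a22 0 (Nat.zero_le r) with hb22d
    have hbh11 : b11.IsHomogeneous (d1 - 1) := h11 0 (Nat.zero_le r)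
    have hbh12 : b12.IsHomogeneous (d1 - 1) := by
      have := (isHomogeneous_X_pow (R := A) 1 r).mul (h12 0 (Nat.zero_le r))
      exact (show r + (d1 - (r - 0) - 1) = d1 - 1 by omega) ▸ this
    have ht : C c * (b11 * b22 - b12 * b21) ∈ I := by
      rw [show b11 * b22 - b12 * b21 = X 1 ^ r * s 0 from htid]
      exact hc
    obtain ⟨U, V, hUV⟩ := Ideal.mem_span_pair.mp ht
    have hX0t : X 0 * (b11 * b22 - b12 * b21) = b22 * f1 - b12 * f2 := by
      rw [hb1, hb2]; ring
    have hX1t : X 1 * (b11 * b22 - b12 * b21) = b11 * f2 - b21 * f1 := by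
      rw [hb1, hb2]; ring
    have step1 : (C c * b12 + X 0 * V) * f2 = (C c * b22 - X 0 * U) * f1 := by
      linear_combination C c * hX0t + X 0 * hUV
    have mem1 : C c * b12 + X 0 * V ∈ Ideal.span {f1} :=
      regf2 hreg (by rw [step1]; exact Ideal.mem_span_singleton'.mpr ⟨_, rfl⟩)
    obtain ⟨W1, hW1⟩ := Ideal.mem_span_singleton'.mp mem1
    have step2 : (C c * b11 - X 1 * V) * f2 = (X 1 * U + C c * b21) * f1 := by
      linear_combination -(C c * hX1t) - X 1 * hUV
    have mem2 : C c * b11 - X 1 * V ∈ Ideal.span {f1} :=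
      regf2 hreg (by rw [step2]; exact Ideal.mem_span_singleton'.mpr ⟨_, rfl⟩)
    obtain ⟨W2, hW2⟩ := Ideal.mem_span_singleton'.mp mem2
    have eq1 : C c * b12 + homogeneousComponent (d1-1) (X 0 * V) = 0 := by
      have h := congrArg (homogeneousComponent (d1-1)) hW1
      rw [hc_mul_right_lt hf1 W1 (by omega), map_add,
        hcself _ _ ((show 0 + (d1-1) = d1-1 by omega) ▸ (isHomogeneous_C (Fin 2) c).mul hbh12)] at h
      exact h.symm
    have eq2 : C c * b11 - homogeneousComponent (d1-1) (X 1 * V) = 0 := by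
      have h := congrArg (homogeneousComponent (d1-1)) hW2
      rw [hc_mul_right_lt hf1 W2 (by omega), map_sub,
        hcself _ _ ((show 0 + (d1-1) = d1-1 by omega) ▸ (isHomogeneous_C (Fin 2) c).mul hbh11)] at h
      exact h.symm
    obtain ⟨v, E12, E11⟩ : ∃ v, C c * b12 = -(X 0 * v) ∧ C c * b11 = X 1 * v := by
      rcases Nat.lt_or_ge d1 2 with hd | hd
      · refine ⟨0, ?_, ?_⟩
        · have h0 : homogeneousComponent (d1-1) (X 0 * V) = 0 := by
            rw [mul_comm]; exact hc_mul_right_lt (isHomogeneous_X A 0) V (by omega)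
          rw [h0, add_zero] at eq1; rw [eq1, mul_zero, neg_zero]
        · have h0 : homogeneousComponent (d1-1) (X 1 * V) = 0 := by
            rw [mul_comm]; exact hc_mul_right_lt (isHomogeneous_X A 1) V (by omega)
          rw [h0] at eq2; rw [mul_zero]; linear_combination eq2
      · refine ⟨homogeneousComponent (d1-2) V, ?_, ?_⟩
        · have h1 : homogeneousComponent (d1-1) (X 0 * V)
              = homogeneousComponent (d1-2) V * X 0 := by
            rw [mul_comm, show d1 - 1 = (d1-2) + 1 by omega,
              hc_mul_right (isHomogeneous_X A 0) V (d1-2)]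
          rw [h1] at eq1; linear_combination eq1
        · have h1 : homogeneousComponent (d1-1) (X 1 * V)
              = homogeneousComponent (d1-2) V * X 1 := by
            rw [mul_comm, show d1 - 1 = (d1-2) + 1 by omega,
              hc_mul_right (isHomogeneous_X A 1) V (d1-2)]
          rw [h1] at eq2; linear_combination eq2
    have hzero : f1 * C c = 0 := by
      linear_combination C c * hb1 + X 0 * E11 + X 1 * E12
    have hCc : C c = (0 : MvPolynomial (Fin 2) A) := regf1 hreg hzero
    have hCc' : (C c : MvPolynomial (Fin 2) A) = C (0 : A) := by rw [hCc, map_zero]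
    exact C_injective (Fin 2) A hCc'
  -- relation to the top form
  have Ft : ∀ j (hj : j ≤ r), X 0 ^ j * X 1 ^ (r-j) * s j - X 1 ^ r * s 0 ∈ I := by
    intro j hj
    have hd1j : f1 = X 0 ^ 1 * (X 0 ^ j * a11 j hj) + X 1 ^ 1 * (X 1 ^ (r-j) * a12 j hj) := by
      rw [hdc1 j hj]; ring
    have hd2j : f2 = X 0 ^ 1 * (X 0 ^ j * a21 j hj) + X 1 ^ 1 * (X 1 ^ (r-j) * a22 j hj) := by
      rw [hdc2 j hj]; ring
    have hd10 : f1 = X 0 ^ 1 * (a11 0 (Nat.zero_le r)) + X 1 ^ 1 * (X 1 ^ r * a12 0 (Nat.zero_le r)) := by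
      rw [hb1]; ring
    have hd20 : f2 = X 0 ^ 1 * (a21 0 (Nat.zero_le r)) + X 1 ^ 1 * (X 1 ^ r * a22 0 (Nat.zero_le r)) := by
      rw [hb2]; ring
    have hci := ci hreg 1 1 _ _ _ _ _ _ _ _ hd1j hd2j hd10 hd20
    have heq : X 0 ^ j * X 1 ^ (r-j) * s j - X 1 ^ r * s 0
        = (X 0 ^ j * a11 j hj * (X 1 ^ (r-j) * a22 j hj)
            - X 1 ^ (r-j) * a12 j hj * (X 0 ^ j * a21 j hj))
          - (a11 0 (Nat.zero_le r) * (X 1 ^ r * a22 0 (Nat.zero_le r))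
            - X 1 ^ r * a12 0 (Nat.zero_le r) * a21 0 (Nat.zero_le r)) := by
      rw [hdet j hj, hdet 0 (Nat.zero_le r)]; ring
    rw [heq]; exact hci
  -- the descent relation  X0 * (X1^l * s j) ≡ X1^(l+1) * s (j-1)
  have F1 : ∀ j l, 1 ≤ j → j ≤ r → j + l ≤ r + 1 →
      X 0 * (X 1 ^ l * s j) - X 1 ^ (l+1) * s (j-1) ∈ I := by
    intro j l hj1 hjr hjl
    have hj1r : j - 1 ≤ r := by omega
    have hd1j : f1 = X 0 ^ j * (X 0 * a11 j hjr)
        + X 1 ^ (r + 1 - j - l) * (X 1 ^ l * a12 j hjr) := by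
      rw [hdc1 j hjr, show r - j + 1 = (r + 1 - j - l) + l by omega, pow_add]; ring
    have hd2j : f2 = X 0 ^ j * (X 0 * a21 j hjr)
        + X 1 ^ (r + 1 - j - l) * (X 1 ^ l * a22 j hjr) := by
      rw [hdc2 j hjr, show r - j + 1 = (r + 1 - j - l) + l by omega, pow_add]; ring
    have hd1j' : f1 = X 0 ^ j * a11 (j-1) hj1r
        + X 1 ^ (r + 1 - j - l) * (X 1 ^ (l+1) * a12 (j-1) hj1r) := by
      rw [hdc1 (j-1) hj1r, show (j-1) + 1 = j by omega,
        show r - (j-1) + 1 = (r + 1 - j - l) + (l+1) by omega, pow_add]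
      ring
    have hd2j' : f2 = X 0 ^ j * a21 (j-1) hj1r
        + X 1 ^ (r + 1 - j - l) * (X 1 ^ (l+1) * a22 (j-1) hj1r) := by
      rw [hdc2 (j-1) hj1r, show (j-1) + 1 = j by omega,
        show r - (j-1) + 1 = (r + 1 - j - l) + (l+1) by omega, pow_add]
      ring
    have hci := ci hreg j (r + 1 - j - l) _ _ _ _ _ _ _ _ hd1j hd2j hd1j' hd2j'
    have heq : X 0 * (X 1 ^ l * s j) - X 1 ^ (l+1) * s (j-1)
        = (X 0 * a11 j hjr * (X 1 ^ l * a22 j hjr)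
            - X 1 ^ l * a12 j hjr * (X 0 * a21 j hjr))
          - (a11 (j-1) hj1r * (X 1 ^ (l+1) * a22 (j-1) hj1r)
            - X 1 ^ (l+1) * a12 (j-1) hj1r * a21 (j-1) hj1r) := by
      rw [hdet j hjr, hdet (j-1) hj1r]; ring
    rw [heq]; exact hci
  have F2 : ∀ l : ℕ, X 0 * (X 1 ^ l * s 0) ∈ I := by
    intro l
    have e : X 0 * (X 1 ^ l * s 0) = X 1 ^ l * (X 0 ^ (0+1) * s 0) := by ring
    rw [e]; exact Ideal.mul_mem_left _ _ (IdA 0 (Nat.zero_le r))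
  -- linear independence at every level
  have LI : ∀ (l : ℕ) (c : ℕ → A),
      (∑ j ∈ Finset.range (r+1), C (c j) * (X 1 ^ l * s j)) ∈ I →
      ∀ j, j + l ≤ r → c j = 0 := by
    intro l c hsum j hjl
    have hj : j ≤ r := by omega
    have hjr : j ∈ Finset.range (r+1) := Finset.mem_range.mpr (by omega)
    have hmul : (∑ j' ∈ Finset.range (r+1),
        X 0 ^ j * X 1 ^ (r - l - j) * (C (c j') * (X 1 ^ l * s j'))) ∈ I := by
      rw [← Finset.mul_sum]
      exact Ideal.mul_mem_left _ _ hsum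
    have hterm : ∀ j' ∈ (Finset.range (r+1)).erase j,
        X 0 ^ j * X 1 ^ (r - l - j) * (C (c j') * (X 1 ^ l * s j')) ∈ I := by
      intro j' hj'
      obtain ⟨hne, hj'mem⟩ := Finset.mem_erase.mp hj'
      have hj'r : j' ≤ r := by
        have := Finset.mem_range.mp hj'mem; omega
      rcases Nat.lt_or_ge j' j with hlt | hge
      · have e : X 0 ^ j * X 1 ^ (r - l - j) * (C (c j') * (X 1 ^ l * s j'))
            = (X 1 ^ (r - l - j) * X 1 ^ l * C (c j')) * (X 0 ^ j * s j') := by ring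
        rw [e]
        exact Ideal.mul_mem_left _ _ (X0pow_mem j' hj'r j (by omega))
      · have hgt : j < j' := by omega
        have e : X 0 ^ j * X 1 ^ (r - l - j) * (C (c j') * (X 1 ^ l * s j'))
            = (X 0 ^ j * C (c j')) * (X 1 ^ ((r - l - j) + l) * s j') := by
          rw [pow_add]; ring
        rw [e]
        exact Ideal.mul_mem_left _ _ (X1pow_mem j' hj'r _ (by omega))
    have hsingle : X 0 ^ j * X 1 ^ (r - l - j) * (C (c j) * (X 1 ^ l * s j)) ∈ I := by
      have hsplit := Finset.add_sum_erase (Finset.range (r+1))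
        (fun j' => X 0 ^ j * X 1 ^ (r - l - j) * (C (c j') * (X 1 ^ l * s j'))) hjr
      have hrest : (∑ j' ∈ (Finset.range (r+1)).erase j,
          X 0 ^ j * X 1 ^ (r - l - j) * (C (c j') * (X 1 ^ l * s j'))) ∈ I :=
        Ideal.sum_mem _ hterm
      have e : X 0 ^ j * X 1 ^ (r - l - j) * (C (c j) * (X 1 ^ l * s j))
          = (∑ j' ∈ Finset.range (r+1),
              X 0 ^ j * X 1 ^ (r - l - j) * (C (c j') * (X 1 ^ l * s j')))
            - ∑ j' ∈ (Finset.range (r+1)).erase j,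
              X 0 ^ j * X 1 ^ (r - l - j) * (C (c j') * (X 1 ^ l * s j')) := by
        rw [← hsplit]; ring
      rw [e]; exact Ideal.sub_mem _ hmul hrest
    have e2 : X 0 ^ j * X 1 ^ (r - l - j) * (C (c j) * (X 1 ^ l * s j))
        = C (c j) * (X 0 ^ j * X 1 ^ (r - j) * s j) := by
      rw [show r - j = (r - l - j) + l by omega, pow_add]; ring
    rw [e2] at hsingle
    have hct : C (c j) * (X 1 ^ r * s 0) ∈ I := by
      have hdiff := Ideal.mul_mem_left I (C (c j)) (Ft j hj)
      have e3 : C (c j) * (X 1 ^ r * s 0)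
          = C (c j) * (X 0 ^ j * X 1 ^ (r - j) * s j)
            - C (c j) * (X 0 ^ j * X 1 ^ (r - j) * s j - X 1 ^ r * s 0) := by ring
      rw [e3]; exact Ideal.sub_mem _ hsingle hdiff
    exact kf (c j) hct
  -- the master descent lemma
  have Master : ∀ k : ℕ, ∀ (l : ℕ) (H : MvPolynomial (Fin 2) A), H.IsHomogeneous (ν + l) →
      (∀ a b : ℕ, a + b = k → X 0 ^ a * X 1 ^ b * H ∈ I) →
      ∃ c : ℕ → A, H - ∑ j ∈ Finset.range (r+1), C (c j) * (X 1 ^ l * s j) ∈ I := by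
    intro k
    induction k with
    | zero =>
      intro l H _ hk
      refine ⟨fun _ => 0, ?_⟩
      simpa using hk 0 0 rfl
    | succ k ih =>
      intro l H hH hk
      -- homogeneity of X0*H, X1*H
      have hH0 : (X 0 * H).IsHomogeneous (ν + (l+1)) := by
        have := (isHomogeneous_X A 0).mul hH
        exact (show 1 + (ν + l) = ν + (l+1) by omega) ▸ this
      have hH1 : (X 1 * H).IsHomogeneous (ν + (l+1)) := by
        have := (isHomogeneous_X A 1).mul hH
        exact (show 1 + (ν + l) = ν + (l+1) by omega) ▸ this
      -- normalized coefficient extraction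
      have hgetc : ∀ G : MvPolynomial (Fin 2) A, G.IsHomogeneous (ν + (l+1)) →
          (∀ a b : ℕ, a + b = k → X 0 ^ a * X 1 ^ b * G ∈ I) →
          ∃ e : ℕ → A,
            (G - ∑ j ∈ Finset.range (r+1), C (e j) * (X 1 ^ (l+1) * s j) ∈ I) ∧
            ∀ j, ¬ (j + (l+1) ≤ r) → e j = 0 := by
        intro G hGh hGk
        obtain ⟨e0, he0⟩ := ih (l+1) G hGh hGk
        refine ⟨fun j => if j + (l+1) ≤ r then e0 j else 0, ?_, fun j h => by simp [h]⟩
        have hdiff : (∑ j ∈ Finset.range (r+1),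
            (C (e0 j) * (X 1 ^ (l+1) * s j)
              - C (if j + (l+1) ≤ r then e0 j else 0) * (X 1 ^ (l+1) * s j))) ∈ I := by
          apply Ideal.sum_mem
          intro j hjr
          have hjle : j ≤ r := by have := Finset.mem_range.mp hjr; omega
          by_cases hle : j + (l+1) ≤ r
          · simp [hle]
          · rw [if_neg hle, map_zero, zero_mul, sub_zero]
            exact Ideal.mul_mem_left _ _ (X1pow_mem j hjle (l+1) (by omega))
        have heq : G - ∑ j ∈ Finset.range (r+1),
              C (if j + (l+1) ≤ r then e0 j else 0) * (X 1 ^ (l+1) * s j)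
            = (G - ∑ j ∈ Finset.range (r+1), C (e0 j) * (X 1 ^ (l+1) * s j))
              + ∑ j ∈ Finset.range (r+1),
                (C (e0 j) * (X 1 ^ (l+1) * s j)
                  - C (if j + (l+1) ≤ r then e0 j else 0) * (X 1 ^ (l+1) * s j)) := by
          rw [Finset.sum_sub_distrib]; ring
        rw [heq]; exact Ideal.add_mem _ he0 hdiff
      obtain ⟨e, he, hze⟩ := hgetc (X 0 * H) hH0 (fun a b hab => by
        have h := hk (a+1) b (by omega)
        have e : X 0 ^ (a+1) * X 1 ^ b * H = X 0 ^ a * X 1 ^ b * (X 0 * H) := by ring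
        rwa [e] at h)
      obtain ⟨e', he', hze'⟩ := hgetc (X 1 * H) hH1 (fun a b hab => by
        have h := hk a (b+1) (by omega)
        have e : X 0 ^ a * X 1 ^ (b+1) * H = X 0 ^ a * X 1 ^ b * (X 1 * H) := by ring
        rwa [e] at h)
      -- the "shift down by X0" comparison, used twice:
      -- for any coefficients d : ℕ → A vanishing for j + l' > r (with l' ≥ l arbitrary power),
      -- ∑ C(d j) * (X0 * (X1^l' * s j))  ≡  ∑ C (d (j+1)) * (X1^(l'+1) * s j)  mod I
      have hshift : ∀ (l' : ℕ) (d : ℕ → A), (∀ j, ¬ (j + l' ≤ r + 1) → d j = 0) →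
          d (r+1) = 0 →
          (∑ j ∈ Finset.range (r+1), C (d j) * (X 0 * (X 1 ^ l' * s j)))
            - ∑ j ∈ Finset.range (r+1), C (d (j+1)) * (X 1 ^ (l'+1) * s j) ∈ I := by
        intro l' d hd hzt
        have hstep1 : ∑ j ∈ Finset.range (r+1), C (d (j+1)) * (X 1 ^ (l'+1) * s j)
            = ∑ j ∈ Finset.range (r+2),
                (if j = 0 then 0 else C (d j) * (X 1 ^ (l'+1) * s (j-1))) := by
          rw [Finset.sum_range_succ' (fun j =>
            (if j = 0 then 0 else C (d j) * (X 1 ^ (l'+1) * s (j-1))))]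
          simp
        have hstep2 : ∑ j ∈ Finset.range (r+2),
              (if j = 0 then 0 else C (d j) * (X 1 ^ (l'+1) * s (j-1)))
            = ∑ j ∈ Finset.range (r+1),
              (if j = 0 then 0 else C (d j) * (X 1 ^ (l'+1) * s (j-1))) := by
          rw [Finset.sum_range_succ]
          rw [if_neg (by omega), hzt, map_zero, zero_mul, add_zero]
        rw [hstep1, hstep2, ← Finset.sum_sub_distrib]
        apply Ideal.sum_mem
        intro j hjr
        have hjle : j ≤ r := by have := Finset.mem_range.mp hjr; omega
        by_cases hj0 : j = 0
        · subst hj0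
          rw [if_pos rfl, sub_zero]
          exact Ideal.mul_mem_left _ _ (F2 l')
        · rw [if_neg hj0]
          by_cases hjl : j + l' ≤ r + 1
          · have e : C (d j) * (X 0 * (X 1 ^ l' * s j)) - C (d j) * (X 1 ^ (l'+1) * s (j-1))
                = C (d j) * (X 0 * (X 1 ^ l' * s j) - X 1 ^ (l'+1) * s (j-1)) := by ring
            rw [e]
            exact Ideal.mul_mem_left _ _ (F1 j l' (by omega) hjle hjl)
          · rw [hd j hjl, map_zero, zero_mul, zero_mul, sub_zero]
            exact Ideal.zero_mem I
      -- consistency of e and e'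
      have hcons : ∀ j, j + (l+2) ≤ r → e j = e' (j+1) := by
        intro j hj2
        -- X1 * he
        have A1 : X 1 * (X 0 * H) - ∑ j ∈ Finset.range (r+1),
            C (e j) * (X 1 ^ (l+2) * s j) ∈ I := by
          have hm := Ideal.mul_mem_left I (X 1) he
          have eeq : X 1 * (X 0 * H - ∑ j ∈ Finset.range (r+1),
              C (e j) * (X 1 ^ (l+1) * s j))
              = X 1 * (X 0 * H) - ∑ j ∈ Finset.range (r+1),
                C (e j) * (X 1 ^ (l+2) * s j) := by
            rw [mul_sub, Finset.mul_sum]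
            congr 1
            apply Finset.sum_congr rfl
            intro j _
            ring
          rwa [eeq] at hm
        -- X0 * he'
        have A2 : X 0 * (X 1 * H) - ∑ j ∈ Finset.range (r+1),
            C (e' j) * (X 0 * (X 1 ^ (l+1) * s j)) ∈ I := by
          have hm := Ideal.mul_mem_left I (X 0) he'
          have eeq : X 0 * (X 1 * H - ∑ j ∈ Finset.range (r+1),
              C (e' j) * (X 1 ^ (l+1) * s j))
              = X 0 * (X 1 * H) - ∑ j ∈ Finset.range (r+1),
                C (e' j) * (X 0 * (X 1 ^ (l+1) * s j)) := by
            rw [mul_sub, Finset.mul_sum]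
            congr 1
            apply Finset.sum_congr rfl
            intro j _
            ring
          rwa [eeq] at hm
        have A3 := hshift (l+1) e' (fun j h => hze' j (by omega)) (hze' (r+1) (by omega))
        have A4 : X 0 * (X 1 * H) - ∑ j ∈ Finset.range (r+1),
            C (e' (j+1)) * (X 1 ^ (l+2) * s j) ∈ I := by
          have := Ideal.add_mem _ A2 A3
          have eeq : X 0 * (X 1 * H) - ∑ j ∈ Finset.range (r+1),
              C (e' (j+1)) * (X 1 ^ ((l+1)+1) * s j)
              = (X 0 * (X 1 * H) - ∑ j ∈ Finset.range (r+1),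
                  C (e' j) * (X 0 * (X 1 ^ (l+1) * s j)))
                + ((∑ j ∈ Finset.range (r+1), C (e' j) * (X 0 * (X 1 ^ (l+1) * s j)))
                  - ∑ j ∈ Finset.range (r+1), C (e' (j+1)) * (X 1 ^ ((l+1)+1) * s j)) := by
            ring
          rw [show (l+2) = (l+1)+1 from rfl]
          rw [eeq]; exact this
        have hfin : ∑ j ∈ Finset.range (r+1),
            C (e j - e' (j+1)) * (X 1 ^ (l+2) * s j) ∈ I := by
          have hcomm : X 1 * (X 0 * H) = X 0 * (X 1 * H) := by ring
          rw [hcomm] at A1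
          have := Ideal.sub_mem _ A4 A1
          have eeq : ∑ j ∈ Finset.range (r+1), C (e j - e' (j+1)) * (X 1 ^ (l+2) * s j)
              = (X 0 * (X 1 * H) - ∑ j ∈ Finset.range (r+1),
                  C (e' (j+1)) * (X 1 ^ (l+2) * s j))
                - (X 0 * (X 1 * H) - ∑ j ∈ Finset.range (r+1),
                  C (e j) * (X 1 ^ (l+2) * s j)) := by
            have e1 : ∑ j ∈ Finset.range (r+1), C (e j - e' (j+1)) * (X 1 ^ (l+2) * s j)
                = (∑ j ∈ Finset.range (r+1), C (e j) * (X 1 ^ (l+2) * s j))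
                  - ∑ j ∈ Finset.range (r+1), C (e' (j+1)) * (X 1 ^ (l+2) * s j) := by
              rw [← Finset.sum_sub_distrib]
              apply Finset.sum_congr rfl
              intro j _
              rw [map_sub, sub_mul]
            rw [e1]; ring
          rw [eeq]; exact Ideal.sub_mem _ A4 A1
        have hz := LI (l+2) (fun j => e j - e' (j+1)) hfin j hj2
        exact sub_eq_zero.mp hz
      -- the candidate coefficients
      set cd : ℕ → A := fun j => if j + l ≤ r
        then (if j + (l+1) ≤ r then e' j else e (j-1)) else 0 with hcd
      set H' : MvPolynomial (Fin 2) A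
        := H - ∑ j ∈ Finset.range (r+1), C (cd j) * (X 1 ^ l * s j) with hH'
      have hH'hom : H'.IsHomogeneous (ν + l) := by
        apply hH.sub
        apply IsHomogeneous.sum
        intro j hj
        have hjle : j ≤ r := by have := Finset.mem_range.mp hj; omega
        have := (isHomogeneous_C (Fin 2) (cd j)).mul
          ((isHomogeneous_X_pow (R := A) 1 l).mul (hsH j hjle))
        exact (show 0 + (l + ν) = ν + l by omega) ▸ this
      have hcz : ∀ j, ¬ (j + l ≤ r + 1) → cd j = 0 := by
        intro j h
        simp only [hcd]
        rw [if_neg (by omega)]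
      have hcztop : cd (r+1) = 0 := by
        simp only [hcd]
        rw [if_neg (by omega)]
      -- X0 * H' ∈ I
      have hX0H' : X 0 * H' ∈ I := by
        have hsh := hshift l cd hcz hcztop
        have meme : ∀ j ∈ Finset.range (r+1), e j = cd (j+1) := by
          intro j hj
          simp only [hcd]
          by_cases h1 : j + (l+1) ≤ r
          · rw [if_pos (by omega : (j+1) + l ≤ r)]
            by_cases h2 : (j+1) + (l+1) ≤ r
            · rw [if_pos h2]; exact hcons j (by omega)
            · rw [if_neg h2]
              simp
          · rw [if_neg (by omega : ¬ ((j+1) + l ≤ r))]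
            exact hze j h1
        have hsum1 : X 0 * H'
            = (X 0 * H - ∑ j ∈ Finset.range (r+1), C (e j) * (X 1 ^ (l+1) * s j))
            + ((∑ j ∈ Finset.range (r+1), C (cd (j+1)) * (X 1 ^ (l+1) * s j))
              - ∑ j ∈ Finset.range (r+1), C (cd j) * (X 0 * (X 1 ^ l * s j))) := by
          have hXsum : X 0 * (∑ j ∈ Finset.range (r+1), C (cd j) * (X 1 ^ l * s j))
              = ∑ j ∈ Finset.range (r+1), C (cd j) * (X 0 * (X 1 ^ l * s j)) := by
            rw [Finset.mul_sum]; apply Finset.sum_congr rfl; intro j _; ring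
          have hesum : ∑ j ∈ Finset.range (r+1), C (e j) * (X 1 ^ (l+1) * s j)
              = ∑ j ∈ Finset.range (r+1), C (cd (j+1)) * (X 1 ^ (l+1) * s j) :=
            Finset.sum_congr rfl (fun j hj => by rw [meme j hj])
          rw [hH', mul_sub, hXsum, hesum]; ring
        rw [hsum1]
        refine Ideal.add_mem _ he ?_
        have := neg_mem hsh
        simpa [neg_sub] using this
      -- X1 * H' ∈ I
      have hX1H' : X 1 * H' ∈ I := by
        have hsum1 : X 1 * H'
            = (X 1 * H - ∑ j ∈ Finset.range (r+1), C (e' j) * (X 1 ^ (l+1) * s j))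
            + ∑ j ∈ Finset.range (r+1), (C (e' j) - C (cd j)) * (X 1 ^ (l+1) * s j) := by
          have hXsum : X 1 * (∑ j ∈ Finset.range (r+1), C (cd j) * (X 1 ^ l * s j))
              = ∑ j ∈ Finset.range (r+1), C (cd j) * (X 1 ^ (l+1) * s j) := by
            rw [Finset.mul_sum]; apply Finset.sum_congr rfl; intro j _; ring
          have hsub : ∑ j ∈ Finset.range (r+1), (C (e' j) - C (cd j)) * (X 1 ^ (l+1) * s j)
              = (∑ j ∈ Finset.range (r+1), C (e' j) * (X 1 ^ (l+1) * s j))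
                - ∑ j ∈ Finset.range (r+1), C (cd j) * (X 1 ^ (l+1) * s j) := by
            rw [← Finset.sum_sub_distrib]
            apply Finset.sum_congr rfl
            intro j _
            rw [sub_mul]
          rw [hH', mul_sub, hXsum, hsub]; ring
        rw [hsum1]
        refine Ideal.add_mem _ he' ?_
        apply Ideal.sum_mem
        intro j hj
        have hjle : j ≤ r := by have := Finset.mem_range.mp hj; omega
        by_cases h1 : j + (l+1) ≤ r
        · have hcde : cd j = e' j := by
            simp only [hcd]; rw [if_pos (by omega), if_pos h1]
          rw [hcde, sub_self, zero_mul]; exact Ideal.zero_mem I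
        · exact Ideal.mul_mem_left _ _ (X1pow_mem j hjle (l+1) (by omega))
      -- apply the socle lemma
      obtain ⟨c0, hc0⟩ := socle hreg _ _ _ _ hb1 hb2 (by rw [hIdef] at hX0H'; exact hX0H')
        (by rw [hIdef] at hX1H'; exact hX1H')
      rw [htid, ← hIdef] at hc0
      by_cases hlr : l = r
      · subst hlr
        refine ⟨fun j => cd j + (if j = 0 then c0 else 0), ?_⟩
        have hterm : ∀ j ∈ Finset.range (r+1),
            C (cd j + if j = 0 then c0 else 0) * (X 1 ^ r * s j)
            = C (cd j) * (X 1 ^ r * s j)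
              + (if j = 0 then C c0 * (X 1 ^ r * s j) else 0) := by
          intro j _
          by_cases hj0 : j = 0
          · subst hj0; rw [if_pos rfl, if_pos rfl, map_add]; ring
          · rw [if_neg hj0, if_neg hj0, add_zero, add_zero]
        have hsplit : ∑ j ∈ Finset.range (r+1),
            C (cd j + if j = 0 then c0 else 0) * (X 1 ^ r * s j)
            = (∑ j ∈ Finset.range (r+1), C (cd j) * (X 1 ^ r * s j))
              + C c0 * (X 1 ^ r * s 0) := by
          rw [Finset.sum_congr rfl hterm, Finset.sum_add_distrib,
            Finset.sum_ite_eq' (Finset.range (r+1)) 0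
              (fun j => C c0 * (X 1 ^ r * s j)),
            if_pos (Finset.mem_range.mpr (by omega))]
        have efin : H - ((∑ j ∈ Finset.range (r+1), C (cd j) * (X 1 ^ r * s j))
            + C c0 * (X 1 ^ r * s 0)) = H' - C c0 * (X 1 ^ r * s 0) := by
          rw [hH']; ring
        rw [hsplit, efin]; exact hc0
      · refine ⟨cd, ?_⟩
        obtain ⟨P, Q, hPQ⟩ := Ideal.mem_span_pair.mp (by rw [hIdef] at hc0; exact hc0)
        have hdeg : homogeneousComponent (ν + r) (H' - C c0 * (X 1 ^ r * s 0))
            = - (C c0 * (X 1 ^ r * s 0)) := by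
          have hc0thom : (C c0 * (X 1 ^ r * s 0)).IsHomogeneous (ν + r) :=
            (show 0 + (ν + r) = ν + r by omega) ▸ (isHomogeneous_C (Fin 2) c0).mul hthom
          rw [map_sub,
            homogeneousComponent_of_mem ((mem_homogeneousSubmodule _ _).mpr hH'hom),
            if_neg (by omega), hcself _ _ hc0thom]
          ring
        have hmemt : C c0 * (X 1 ^ r * s 0) ∈ I := by
          have h1 := hcI (ν + r) P Q
          rw [hPQ, hdeg] at h1
          simpa using neg_mem h1
        have efin : H - ∑ j ∈ Finset.range (r+1), C (cd j) * (X 1 ^ l * s j)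
            = (H' - C c0 * (X 1 ^ r * s 0)) + C c0 * (X 1 ^ r * s 0) := by
          rw [hH']; ring
        rw [efin]; exact Ideal.add_mem _ hc0 hmemt
  constructor
  · -- linear independence
    intro c hsum α1 hα1
    apply LI 0 c ?_ α1 (by omega)
    have e : ∑ j ∈ Finset.range (r+1), C (c j) * (X 1 ^ 0 * s j)
        = ∑ j ∈ Finset.range (r+1), C (c j) * s j := by
      apply Finset.sum_congr rfl
      intro j _
      rw [pow_zero, one_mul]
    rw [e]
    exact hsum
  · -- spanning
    intro G hG hiner
    obtain ⟨k, hk⟩ := hiner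
    have hGh : G.IsHomogeneous (ν + 0) := by simpa using hG
    have hX0J : (X 0 : MvPolynomial (Fin 2) A) ∈ Ideal.span {(X 0 : MvPolynomial (Fin 2) A), X 1} :=
      Ideal.subset_span (by simp)
    have hX1J : (X 1 : MvPolynomial (Fin 2) A) ∈ Ideal.span {(X 0 : MvPolynomial (Fin 2) A), X 1} :=
      Ideal.subset_span (by simp)
    obtain ⟨c, hc⟩ := Master k 0 G hGh (fun a b hab => by
      have hmem : X 0 ^ a * X 1 ^ b ∈ (Ideal.span {(X 0 : MvPolynomial (Fin 2) A), X 1}) ^ k := by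
        rw [← hab, pow_add]
        exact Ideal.mul_mem_mul (Ideal.pow_mem_pow hX0J a) (Ideal.pow_mem_pow hX1J b)
      exact hk _ hmem)
    refine ⟨c, ?_⟩
    have e : ∑ j ∈ Finset.range (r+1), C (c j) * (X 1 ^ 0 * s j)
        = ∑ j ∈ Finset.range (r+1), C (c j) * s j := by
      apply Finset.sum_congr rfl
      intro j _
      rw [pow_zero, one_mul]
    rw [e] at hc
    exact hc
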